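/- Let S and T be join-semilattices with zero, let μ : S → T be a weakly distributive join-homomorphism preserving zero, and let e ∈ S. If S satisfies WURP=(e), then T satisfies WURP=(μ(e)). -/
import Mathlib


universe u

/-- `S` satisfies `WURP⁼(e)` with witness `m`: for all families `(a i)`, `(b i)`
with `e ≤ a i ⊔ b i`, there are `m` subsets covering the index set and elements
`c i j` satisfying the refinement conditions. -/
def WURPeqWith {S : Type*} [SemilatticeSup S] [OrderBot S] (m : ℕ) (e : S) : Prop :=
  ∀ (I : Type u) (a b : I → S), (∀ i, e ≤ a i ⊔ b i) →
    ∃ (J : Fin m → Set I) (c : I → I → S),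
      (∀ i : I, ∃ u : Fin m, i ∈ J u) ∧
      (∀ u : Fin m, ∀ i ∈ J u, ∀ j ∈ J u,
        c i j ≤ a i ⊔ a j ∧ c i j ≤ b i ⊔ b j ∧ e ≤ a j ⊔ b i ⊔ c i j) ∧
      (∀ i j k : I, c i k ≤ c i j ⊔ c j k)

/-- `S` satisfies `WURP⁼(e)`. -/
def WURPeq {S : Type*} [SemilatticeSup S] [OrderBot S] (e : S) : Prop :=
  ∃ m : ℕ, 0 < m ∧ WURPeqWith.{u} m e

/-- If `μ : S → T` is a weakly distributive join-homomorphism preserving zero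
and `S` satisfies `WURP⁼(e)`, then `T` satisfies `WURP⁼(μ(e))`. -/
theorem wurp_of_weakly_distributive {S T : Type*} [SemilatticeSup S] [OrderBot S]
    [SemilatticeSup T] [OrderBot T] (μ : S → T)
    (hjoin : ∀ x y : S, μ (x ⊔ y) = μ x ⊔ μ y) (hbot : μ ⊥ = ⊥)
    (hwd : ∀ (c : S) (a b : T), μ c ≤ a ⊔ b →
      ∃ x y : S, c ≤ x ⊔ y ∧ μ x ≤ a ∧ μ y ≤ b)
    (e : S) (he : WURPeq.{u} e) : WURPeq.{u} (μ e) := by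
  obtain ⟨m, hm, hW⟩ := he
  have mono : ∀ {p q : S}, p ≤ q → μ p ≤ μ q := by
    intro p q h
    have : μ q = μ p ⊔ μ q := by rw [← hjoin, sup_eq_right.mpr h]
    rw [this]; exact le_sup_left
  refine ⟨m, hm, ?_⟩
  intro I a b hab
  choose x y hxy hx hy using fun i => hwd e (a i) (b i) (hab i)
  obtain ⟨J, c, hcov, hrel, htr⟩ := hW I x y hxy
  refine ⟨J, fun i j => μ (c i j), hcov, ?_, ?_⟩
  · intro u i hi j hj
    obtain ⟨h1, h2, h3⟩ := hrel u i hi j hj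
    refine ⟨?_, ?_, ?_⟩
    · exact (mono h1).trans (by rw [hjoin]; exact sup_le_sup (hx i) (hx j))
    · exact (mono h2).trans (by rw [hjoin]; exact sup_le_sup (hy i) (hy j))
    · have h := mono h3
      rw [hjoin, hjoin] at h
      exact h.trans (sup_le_sup (sup_le_sup (hx j) (hy i)) le_rfl)
  · intro i j k
    have h := mono (htr i j k)
    rwa [hjoin] at h
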